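/- Let α be a composition, i ≥ 1, and T ∈ SetCompTab(α) such that no box of T contains the value i+1. Then the filling T̂ obtained from T by replacing every occurrence of i with i+1 in every box is again an element of SetCompTab(α). -/
import Mathlib


open Finset MvPolynomial

/-- The inversion-triple condition on anchor values `b, a, c`:
`b > c ≥ a` or `c ≥ a > b`. -/
def InvTriple (b a c : ℕ) : Prop := (c < b ∧ a ≤ c) ∨ (a ≤ c ∧ b < a)

/-- A set-valued filling of the composition shape `α` (row `i : Fin k` is the `(i+1)`-st
row): box `(i, j)` for `1 ≤ j ≤ α i` carries a nonempty finite set of positive integers;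
boxes outside the shape (including the column `j = 0`: there is no basement) are empty. -/
structure SVCompTab (k : ℕ) (α : Fin k → ℕ) where
  box : Fin k → ℕ → Finset ℕ
  nonempty : ∀ i : Fin k, ∀ j : ℕ, 1 ≤ j → j ≤ α i → (box i j).Nonempty
  pos : ∀ i : Fin k, ∀ j : ℕ, ∀ e ∈ box i j, 1 ≤ e
  outside : ∀ i : Fin k, ∀ j : ℕ, (j = 0 ∨ α i < j) → box i j = ∅

namespace SVCompTab

variable {k : ℕ} {α : Fin k → ℕ}

/-- The anchor (= largest) entry of box `(i, j)`. -/
def anchor (T : SVCompTab k α) (i : Fin k) (j : ℕ) : ℕ := (T.box i j).sup id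

/-- Semistandardness conditions (Q1)-(Q3) for set-valued composition tableaux. -/
def IsSemistandard (T : SVCompTab k α) : Prop :=
  (∀ i : Fin k, ∀ j : ℕ, 2 ≤ j → j ≤ α i →
      ∀ a ∈ T.box i (j - 1), ∀ b ∈ T.box i j, b ≤ a) ∧
  (∀ i i' : Fin k, i < i' → 1 ≤ α i → 1 ≤ α i' → T.anchor i 1 < T.anchor i' 1) ∧
  (∀ j : ℕ, 1 ≤ j → ∀ i i' : Fin k, i ≠ i' → j ≤ α i → j ≤ α i' →
      T.anchor i j ≠ T.anchor i' j) ∧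
  (∀ i i' : Fin k, i < i' →
      (α i' ≤ α i → ∀ m : ℕ, 1 ≤ m → m + 1 ≤ α i' →
        InvTriple (T.anchor i' (m + 1)) (T.anchor i (m + 1)) (T.anchor i m)) ∧
      (α i < α i' → ∀ m : ℕ, 1 ≤ m → m ≤ α i → m + 1 ≤ α i' →
        InvTriple (T.anchor i m) (T.anchor i' (m + 1)) (T.anchor i' m))) ∧
  (∀ i : Fin k, ∀ j : ℕ, 1 ≤ j → j ≤ α i → ∀ e ∈ T.box i j, e ≠ T.anchor i j →
      ∀ i' : Fin k, i' < i → j ≤ α i' →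
        ¬ (e < T.anchor i' j ∧ (j = α i' ∨ T.anchor i' (j + 1) ≤ e)))

/-- The number of boxes of `T` containing the value `v`. -/
def content (T : SVCompTab k α) (v : ℕ) : ℕ :=
  ∑ i : Fin k, ((Finset.Icc 1 (α i)).filter (fun j => v ∈ T.box i j)).card

/-- `|T|`, the total number of entries of `T`. -/
def size (T : SVCompTab k α) : ℕ :=
  ∑ i : Fin k, ∑ j ∈ Finset.Icc 1 (α i), (T.box i j).card

end SVCompTab

/-- If `T` is a semistandard set-valued composition tableau of shape `α`
in which the value `v + 1` does not occur, then the filling obtained from `T` by replacing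
every occurrence of `v` by `v + 1` exists and is again a semistandard set-valued
composition tableau of shape `α`. -/
private lemma bump_le_iff (v a b : ℕ) (ha : a ≠ v + 1) (hb : b ≠ v + 1) :
    (if a = v then v + 1 else a) ≤ (if b = v then v + 1 else b) ↔ a ≤ b := by
  split_ifs <;> omega

private lemma bump_lt_iff (v a b : ℕ) (ha : a ≠ v + 1) (hb : b ≠ v + 1) :
    (if a = v then v + 1 else a) < (if b = v then v + 1 else b) ↔ a < b := by
  split_ifs <;> omega

private lemma bump_eq_iff (v a b : ℕ) (ha : a ≠ v + 1) (hb : b ≠ v + 1) :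
    ((if a = v then v + 1 else a) = (if b = v then v + 1 else b)) ↔ a = b := by
  split_ifs <;> omega

private lemma sup_image_bump (v : ℕ) (hv : 1 ≤ v) (s : Finset ℕ) (hs : v + 1 ∉ s) :
    (s.image (fun e => if e = v then v + 1 else e)).sup id
      = (if s.sup id = v then v + 1 else s.sup id) := by
  rcases s.eq_empty_or_nonempty with h | h
  · subst h
    simp only [Finset.image_empty, Finset.sup_empty]
    have hb : ¬ (⊥:ℕ) = v := by simp only [Nat.bot_eq_zero]; omega
    rw [if_neg hb]
  · rw [Finset.sup_image]
    obtain ⟨m, hm, hmeq⟩ := Finset.exists_mem_eq_sup s h id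
    simp only [id] at hmeq
    have hmne : m ≠ v + 1 := fun hc => hs (hc ▸ hm)
    have hsupne : s.sup id ≠ v + 1 := hmeq ▸ hmne
    apply le_antisymm
    · apply Finset.sup_le
      intro b hb
      have hbne : b ≠ v + 1 := fun hc => hs (hc ▸ hb)
      simp only [Function.comp]
      exact (bump_le_iff v b (s.sup id) hbne hsupne).mpr (Finset.le_sup (f := id) hb)
    · have := Finset.le_sup (f := (id ∘ fun e => if e = v then v + 1 else e)) hm
      simp only [Function.comp, id] at this ⊢
      rw [hmeq]; exact this

theorem stmt12 (k : ℕ) (hk : 1 ≤ k) (α : Fin k → ℕ) (hα : ∀ i, 1 ≤ α i)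
    (T : SVCompTab k α) (hT : T.IsSemistandard) (v : ℕ) (hv : 1 ≤ v)
    (hno : ∀ i : Fin k, ∀ j : ℕ, v + 1 ∉ T.box i j) :
    (∃ T' : SVCompTab k α, ∀ i : Fin k, ∀ j : ℕ,
        T'.box i j = (T.box i j).image (fun e => if e = v then v + 1 else e)) ∧
    (∀ T' : SVCompTab k α,
      (∀ i : Fin k, ∀ j : ℕ,
        T'.box i j = (T.box i j).image (fun e => if e = v then v + 1 else e)) →
      T'.IsSemistandard) := by

  have hne : ∀ i : Fin k, ∀ j : ℕ, ∀ e ∈ T.box i j, e ≠ v + 1 :=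
    fun i j e he hc => hno i j (hc ▸ he)
  have hane : ∀ i : Fin k, ∀ j : ℕ, T.anchor i j ≠ v + 1 := by
    intro i j
    rcases (T.box i j).eq_empty_or_nonempty with h | h
    · unfold SVCompTab.anchor; rw [h]; simp
    · obtain ⟨m, hm, hmeq⟩ := Finset.exists_mem_eq_sup _ h (id : ℕ → ℕ)
      unfold SVCompTab.anchor; rw [hmeq]; exact hne i j m hm
  constructor
  · refine ⟨⟨fun i j => (T.box i j).image (fun e => if e = v then v + 1 else e),
      ?_, ?_, ?_⟩, fun i j => rfl⟩
    · intro i j h1 h2; exact (T.nonempty i j h1 h2).image _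
    · intro i j e he
      simp only [Finset.mem_image] at he
      obtain ⟨e0, he0, rfl⟩ := he
      have := T.pos i j e0 he0
      split_ifs <;> omega
    · intro i j h; show Finset.image _ _ = ∅; rw [T.outside i j h]; simp
  · intro T' hbox
    obtain ⟨hQ1, hQ2a, hQ2b, hQ2c, hQ3⟩ := hT
    have hanchor : ∀ i : Fin k, ∀ j : ℕ,
        T'.anchor i j = (if T.anchor i j = v then v + 1 else T.anchor i j) := by
      intro i j
      unfold SVCompTab.anchor
      rw [hbox i j]
      exact sup_image_bump v hv _ (hno i j)
    refine ⟨?_, ?_, ?_, ?_, ?_⟩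
    · intro i j h2 hle a ha b hb
      rw [hbox] at ha hb
      simp only [Finset.mem_image] at ha hb
      obtain ⟨a0, ha0, rfl⟩ := ha
      obtain ⟨b0, hb0, rfl⟩ := hb
      exact (bump_le_iff v b0 a0 (hne _ _ _ hb0) (hne _ _ _ ha0)).mpr
        (hQ1 i j h2 hle a0 ha0 b0 hb0)
    · intro i i' hlt h1 h1'
      rw [hanchor, hanchor]
      exact (bump_lt_iff v _ _ (hane i 1) (hane i' 1)).mpr (hQ2a i i' hlt h1 h1')
    · intro j hj i i' hii hji hji'
      rw [hanchor, hanchor]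
      intro hc
      exact hQ2b j hj i i' hii hji hji'
        ((bump_eq_iff v _ _ (hane i j) (hane i' j)).mp hc)
    · intro i i' hlt
      constructor
      · intro hle m hm1 hm2
        have h := hQ2c i i' hlt |>.1 hle m hm1 hm2
        rw [hanchor, hanchor, hanchor]
        have n1 := hane i' (m + 1); have n2 := hane i (m + 1); have n3 := hane i m
        simp only [InvTriple] at h ⊢
        split_ifs <;> omega
      · intro hle m hm1 hm2 hm3
        have h := hQ2c i i' hlt |>.2 hle m hm1 hm2 hm3
        rw [hanchor, hanchor, hanchor]
        have n1 := hane i m; have n2 := hane i' (m + 1); have n3 := hane i' m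
        simp only [InvTriple] at h ⊢
        split_ifs <;> omega
    · intro i j h1 h2 e he hnea i' hlt hle
      rw [hbox] at he
      simp only [Finset.mem_image] at he
      obtain ⟨e0, he0, rfl⟩ := he
      rw [hanchor] at hnea
      have he0ne : e0 ≠ v + 1 := hne _ _ _ he0
      have he0a : e0 ≠ T.anchor i j := fun hc =>
        hnea ((bump_eq_iff v e0 (T.anchor i j) he0ne (hane i j)).mpr hc)
      have h := hQ3 i j h1 h2 e0 he0 he0a i' hlt hle
      rw [hanchor, hanchor]
      rintro ⟨hc1, hc2⟩
      apply h
      refine ⟨(bump_lt_iff v e0 _ he0ne (hane i' j)).mp hc1, ?_⟩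
      rcases hc2 with hc2 | hc2
      · exact Or.inl hc2
      · exact Or.inr ((bump_le_iff v _ e0 (hane i' (j + 1)) he0ne).mp hc2)
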